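/- arXiv:2211.11173 — 5 statements merged into one kernel-verified Lean document; each statement's English description precedes it below -/
import Mathlib

section
/- Let covers : Fin n → Fin n → Prop be a relation such that there is a strict linear order < on Fin n (by drop-off time) with covers i j → i < j. Given a matching M : set of pairs (i, j) with covers i j, where no index appears twice as a first coordinate and no index appears twice as a second coordinate, the functional graph of M decomposes Fin n into exactly n - |M| disjoint chains (trajectories), i.e., there exists a partition of Fin n into n - |M| lists, each list being a sequence i_1, ..., i_k with (i_s, i_{s+1}) ∈ M for all consecutive pairs. -/
private lemma head_of_no_pred {α} {R : α → α → Prop} :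
    ∀ {l : List α}, l.Chain' R → ∀ {b}, b ∈ l → (∀ c, ¬ R c b) → l.head? = some b := by
  intro l
  induction l with
  | nil => intro _ b hb _; simp at hb
  | cons x t ih =>
    intro h b hb hnp
    rcases List.mem_cons.1 hb with rfl | hb
    · rfl
    · have ht : t.Chain' R := h.tail
      have hh := ih ht hb hnp
      rcases t with _ | ⟨y, t'⟩
      · simp at hh
      · have : y = b := by simpa using hh
        subst this
        exact absurd (List.isChain_cons_cons.1 h).1 (hnp x)

private lemma last_of_no_succ {α} {R : α → α → Prop} :
    ∀ {l : List α}, l.Chain' R → ∀ {a}, a ∈ l → (∀ c, ¬ R a c) → l.getLast? = some a := by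
  intro l
  induction l with
  | nil => intro _ a ha _; simp at ha
  | cons x t ih =>
    intro h a ha hns
    rcases t with _ | ⟨y, t'⟩
    · have : a = x := by simpa using ha
      subst this; rfl
    · have hR : R x y := (List.isChain_cons_cons.1 h).1
      have ht := (List.isChain_cons_cons.1 h).2
      rcases List.mem_cons.1 ha with rfl | ha
      · exact absurd hR (hns y)
      · rw [List.getLast?_cons_cons]
        exact ih ht ha hns

private lemma flatten_map_singleton {α} : ∀ l : List α, (l.map fun x => [x]).flatten = l := by
  intro l; induction l with
  | nil => rfl
  | cons x t ih => simp [ih]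

private lemma perm_flatten {α} {l₁ l₂ : List (List α)} (h : l₁.Perm l₂) :
    l₁.flatten.Perm l₂.flatten := by
  induction h with
  | nil => rfl
  | cons x _ ih => simpa using ih.append_left x
  | swap x y l =>
    simp only [List.flatten_cons]
    rw [← List.append_assoc, ← List.append_assoc]
    exact List.perm_append_comm.append_right _
  | trans _ _ ih₁ ih₂ => exact ih₁.trans ih₂

private lemma aux_decomp (n : ℕ) (covers : Fin n → Fin n → Prop)
    (hlt : ∀ i j, covers i j → i < j) :
    ∀ M : Finset (Fin n × Fin n), (∀ e ∈ M, covers e.1 e.2) →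
    (∀ e ∈ M, ∀ e' ∈ M, e.1 = e'.1 → e = e') →
    (∀ e ∈ M, ∀ e' ∈ M, e.2 = e'.2 → e = e') →
    ∃ L : List (List (Fin n)), L.length + M.card = n ∧
      (∀ l ∈ L, l.Chain' (fun a b => (a, b) ∈ M)) ∧
      L.flatten.Perm (List.finRange n) := by
  intro M
  induction M using Finset.strongInduction with
  | _ M ih =>
    intro hMcov hM1 hM2
    rcases M.eq_empty_or_nonempty with rfl | ⟨e, he⟩
    · refine ⟨(List.finRange n).map (fun x => [x]), by simp, ?_, ?_⟩
      · intro l hl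
        obtain ⟨x, _, rfl⟩ := List.mem_map.1 hl
        exact List.isChain_singleton _
      · rw [flatten_map_singleton]
    · obtain ⟨a, b⟩ := e
      set M' := M.erase (a, b) with hM'
      have hsub : M' ⊆ M := Finset.erase_subset _ _
      have hss : M' ⊂ M := Finset.erase_ssubset he
      obtain ⟨L', hlen, hch, hperm⟩ := ih M' hss (fun e h => hMcov e (hsub h))
        (fun e h e' h' => hM1 e (hsub h) e' (hsub h'))
        (fun e h e' h' => hM2 e (hsub h) e' (hsub h'))
      have hab : covers a b := hMcov _ he
      have haltb : a < b := hlt _ _ hab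
      have hbmem : b ∈ L'.flatten := hperm.mem_iff.2 (List.mem_finRange b)
      obtain ⟨lb, hlbL, hblb⟩ := List.mem_flatten.1 hbmem
      have hamem : a ∈ L'.flatten := hperm.mem_iff.2 (List.mem_finRange a)
      obtain ⟨la, hlaL, hala⟩ := List.mem_flatten.1 hamem
      have hnsucc : ∀ c, ¬ ((a, c) ∈ M') := by
        intro c hc
        have h2 : ((a, c) : Fin n × Fin n) = (a, b) := hM1 _ (hsub hc) _ he rfl
        rw [h2] at hc
        exact (Finset.notMem_erase _ _) hc
      have hnpred : ∀ c, ¬ ((c, b) ∈ M') := by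
        intro c hc
        have h2 : ((c, b) : Fin n × Fin n) = (a, b) := hM2 _ (hsub hc) _ he rfl
        rw [h2] at hc
        exact (Finset.notMem_erase _ _) hc
      have hlast : la.getLast? = some a := last_of_no_succ (hch la hlaL) hala hnsucc
      have hhead : lb.head? = some b := head_of_no_pred (hch lb hlbL) hblb hnpred
      have hne : la ≠ lb := by
        rintro rfl
        have hchlt : la.Chain' (· < ·) :=
          (hch la hlaL).imp (fun {x y} hxy => hlt _ _ (hMcov _ (hsub hxy)))
        rcases la with _ | ⟨x, t⟩
        · simp at hblb
        · have hx : x = b := by simpa using hhead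
          have hat : a ∈ t := by
            rcases List.mem_cons.1 hala with rfl | h
            · subst hx; exact absurd haltb (lt_irrefl _)
            · exact h
          have hba : x < a :=
            List.rel_of_pairwise_cons (List.isChain_iff_pairwise.1 hchlt) hat
          rw [hx] at hba
          exact absurd (haltb.trans hba) (lt_irrefl _)
      obtain ⟨L1, L2, rfl⟩ := List.append_of_mem hlaL
      have hlb2 : lb ∈ L1 ++ L2 := by
        rcases List.mem_append.1 hlbL with h | h
        · exact List.mem_append.2 (Or.inl h)
        · rcases List.mem_cons.1 h with h | h
          · exact absurd h.symm hne
          · exact List.mem_append.2 (Or.inr h)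
      obtain ⟨K1, K2, hK⟩ := List.append_of_mem hlb2
      have pL : (L1 ++ la :: L2).Perm (la :: lb :: (K1 ++ K2)) :=
        List.perm_middle.trans (by rw [hK]; exact (List.perm_middle).cons la)
      have h5 : M.card = M'.card + 1 := by
        rw [hM', Finset.card_erase_of_mem he]
        have : 1 ≤ M.card := Finset.card_pos.2 ⟨(a,b), he⟩
        omega
      refine ⟨(la ++ lb) :: (K1 ++ K2), ?_, ?_, ?_⟩
      · have hl2 := pL.length_eq
        simp only [List.length_cons] at hl2 ⊢
        omega
      · intro l hl
        rcases List.mem_cons.1 hl with rfl | hl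
        · refine List.IsChain.append ?_ ?_ ?_
          · exact ((hch la hlaL).imp (fun {x y} hxy => hsub hxy))
          · exact ((hch lb hlbL).imp (fun {x y} hxy => hsub hxy))
          · intro x hx y hy
            rw [hlast] at hx
            rw [hhead] at hy
            obtain rfl : a = x := by simpa using hx
            obtain rfl : b = y := by simpa using hy
            exact he
        · have hlL : l ∈ L1 ++ la :: L2 := pL.symm.subset (by simp [hl])
          exact ((hch l hlL).imp (fun {x y} hxy => hsub hxy))
      · have hfl : ((la ++ lb) :: (K1 ++ K2)).flatten = (la :: lb :: (K1 ++ K2)).flatten := by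
          simp [List.append_assoc]
        rw [hfl]
        exact ((perm_flatten pL).symm).trans hperm

/-- A matching `M` (with respect to an order-respecting relation `covers`)
decomposes `Fin n` into exactly `n - |M|` chains whose consecutive pairs are
edges of `M`. -/
theorem stmt_4 (n : ℕ) (covers : Fin n → Fin n → Prop)
    (hlt : ∀ i j, covers i j → i < j)
    (M : Finset (Fin n × Fin n)) (hMcov : ∀ e ∈ M, covers e.1 e.2)
    (hM1 : ∀ e ∈ M, ∀ e' ∈ M, e.1 = e'.1 → e = e')
    (hM2 : ∀ e ∈ M, ∀ e' ∈ M, e.2 = e'.2 → e = e') :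
    ∃ L : List (List (Fin n)), L.length = n - M.card ∧
      (∀ l ∈ L, l.Chain' (fun a b => (a, b) ∈ M)) ∧
      L.flatten.Perm (List.finRange n) := by
  obtain ⟨L, h1, h2, h3⟩ := aux_decomp n covers hlt M hMcov hM1 hM2
  exact ⟨L, by omega, h2, h3⟩
end

section
/- Let covers : Fin n → Fin n → Prop satisfy covers i j → i < j (with respect to the natural order on Fin n). Then the minimum number of chains (sequences in which consecutive elements are related by covers) needed to partition Fin n equals n minus the maximum size of a matching in the bipartite graph with parts Fin n (as drop-offs) and Fin n (as pickups) and edges {(i,j) : covers i j}. -/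
section aux
variable {α : Type*}

lemma zip_tail_rel {r : α → α → Prop} :
    ∀ {l : List α}, l.Chain' r → ∀ p ∈ l.zip l.tail, r p.1 p.2 := by
  intro l
  induction l with
  | nil => simp
  | cons a l ih =>
    cases l with
    | nil => simp
    | cons b l' =>
      intro h p hp
      rw [List.Chain', List.isChain_cons_cons] at h
      rw [show (a::b::l').tail = b::l' from rfl, List.zip_cons_cons, List.mem_cons] at hp
      rcases hp with hp | hp
      · subst hp; exact h.1
      · exact ih h.2 p hp

lemma zip_tail_fst_unique :
    ∀ {l : List α}, l.Nodup → ∀ {a b b' : α},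
      (a, b) ∈ l.zip l.tail → (a, b') ∈ l.zip l.tail → b = b' := by
  intro l
  induction l with
  | nil => simp
  | cons x l ih =>
    cases l with
    | nil => simp
    | cons y l' =>
      intro hnd a b b' h1 h2
      have hx : x ∉ (y :: l') := (List.nodup_cons.mp hnd).1
      rw [show (x::y::l').tail = y::l' from rfl, List.zip_cons_cons, List.mem_cons] at h1 h2
      rcases h1 with h1 | h1 <;> rcases h2 with h2 | h2
      · rw [Prod.mk.injEq] at h1 h2; rw [h1.2, h2.2]
      · rw [Prod.mk.injEq] at h1; rw [h1.1] at h2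
        exact absurd (List.of_mem_zip h2).1 hx
      · rw [Prod.mk.injEq] at h2; rw [h2.1] at h1
        exact absurd (List.of_mem_zip h1).1 hx
      · exact ih (List.nodup_cons.mp hnd).2 h1 h2

lemma zip_tail_snd_unique :
    ∀ {l : List α}, l.Nodup → ∀ {a a' b : α},
      (a, b) ∈ l.zip l.tail → (a', b) ∈ l.zip l.tail → a = a' := by
  intro l
  induction l with
  | nil => simp
  | cons x l ih =>
    cases l with
    | nil => simp
    | cons y l' =>
      intro hnd a a' b h1 h2
      have hy : y ∉ l' := (List.nodup_cons.mp (List.nodup_cons.mp hnd).2).1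
      rw [show (x::y::l').tail = y::l' from rfl, List.zip_cons_cons, List.mem_cons] at h1 h2
      rcases h1 with h1 | h1 <;> rcases h2 with h2 | h2
      · rw [Prod.mk.injEq] at h1 h2; rw [h1.1, h2.1]
      · rw [Prod.mk.injEq] at h1; rw [h1.2] at h2
        exact absurd (List.of_mem_zip h2).2 hy
      · rw [Prod.mk.injEq] at h2; rw [h2.2] at h1
        exact absurd (List.of_mem_zip h1).2 hy
      · exact ih (List.nodup_cons.mp hnd).2 h1 h2

lemma zip_tail_nodup {l : List α} (h : l.Nodup) : (l.zip l.tail).Nodup := by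
  have h2 : (l.zip l.tail).map Prod.snd = l.tail :=
    List.map_snd_zip (by cases l <;> simp)
  exact List.Nodup.of_map Prod.snd (by rw [h2]; exact h.tail)

lemma zip_tail_length {l : List α} : (l.zip l.tail).length = l.length - 1 := by
  cases l <;> simp [List.length_zip]

lemma flatMap_tail_nodup : ∀ {L : List (List α)}, L.flatten.Nodup →
    (L.flatMap List.tail).Nodup := by
  intro L
  induction L with
  | nil => simp
  | cons l L ih =>
    intro h
    rw [List.flatten_cons, List.nodup_append] at h
    rw [List.flatMap_cons, List.nodup_append]
    refine ⟨h.1.sublist (List.tail_sublist l), ih h.2.1, ?_⟩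
    intro a ha b hb
    have ha' : a ∈ l := List.mem_of_mem_tail ha
    have hb' : b ∈ L.flatten := by
      rcases List.mem_flatMap.mp hb with ⟨l', hl', ha''⟩
      exact List.mem_flatten.mpr ⟨l', hl', List.mem_of_mem_tail ha''⟩
    exact h.2.2 a ha' b hb'
end aux


/-- A partition of `Fin n` into chains: a list of lists, each of which is a
chain under `covers`, whose concatenation is a permutation of all of `Fin n`. -/
def IsChainPartition (n : ℕ) (covers : Fin n → Fin n → Prop)
    (L : List (List (Fin n))) : Prop :=
  (∀ l ∈ L, l.Chain' covers) ∧ L.flatten.Perm (List.finRange n)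

/-- A matching in the bipartite graph with parts `Fin n` (drop-offs) and
`Fin n` (pickups) and edges `{(i, j) : covers i j}`. -/
def IsMatching (n : ℕ) (covers : Fin n → Fin n → Prop)
    (M : Finset (Fin n × Fin n)) : Prop :=
  (∀ e ∈ M, covers e.1 e.2) ∧
  (∀ e ∈ M, ∀ e' ∈ M, e.1 = e'.1 → e = e') ∧
  (∀ e ∈ M, ∀ e' ∈ M, e.2 = e'.2 → e = e')


lemma pairs_length_ge : ∀ (L : List (List α)),
    L.flatten.length - L.length ≤ (L.flatMap (fun l => l.zip l.tail)).length := by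
  intro L
  induction L with
  | nil => simp
  | cons l L ih =>
    rw [List.flatMap_cons, List.length_append, List.flatten_cons, List.length_append,
      zip_tail_length]
    simp only [List.length_cons]
    omega

lemma matching_of_partition {n : ℕ} {covers : Fin n → Fin n → Prop}
    (L : List (List (Fin n))) (hL : IsChainPartition n covers L) :
    ∃ M : Finset (Fin n × Fin n), IsMatching n covers M ∧ n - L.length ≤ M.card := by
  classical
  obtain ⟨hch, hperm⟩ := hL
  set P : List (Fin n × Fin n) := L.flatMap (fun l => l.zip l.tail) with hP
  have hflat : L.flatten.Nodup := hperm.nodup_iff.mpr (List.nodup_finRange n)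
  obtain ⟨hnd, hdisj⟩ := List.nodup_flatten.mp hflat
  have hPnd : P.Nodup := by
    refine List.Nodup.of_map Prod.snd ?_
    have hms : P.map Prod.snd = L.flatMap List.tail := by
      rw [hP, List.map_flatMap]
      congr 1
      funext l
      exact List.map_snd_zip (by cases l <;> simp)
    rw [hms]
    exact flatMap_tail_nodup hflat
  have hdisj' : ∀ l₁ ∈ L, ∀ l₂ ∈ L, l₁ ≠ l₂ → l₁.Disjoint l₂ :=
    by haveI : Std.Symm (fun a b : List (Fin n) => a.Disjoint b) := ⟨fun _ _ h => h.symm⟩; exact List.Pairwise.forall hdisj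
  refine ⟨P.toFinset, ⟨?_, ?_, ?_⟩, ?_⟩
  · intro e he
    rw [List.mem_toFinset, hP, List.mem_flatMap] at he
    obtain ⟨l, hl, he⟩ := he
    exact zip_tail_rel (hch l hl) e he
  · intro e he e' he' h12
    rw [List.mem_toFinset, hP, List.mem_flatMap] at he he'
    obtain ⟨l, hl, he⟩ := he
    obtain ⟨l', hl', he'⟩ := he'
    have h1 := List.of_mem_zip (show (e.1, e.2) ∈ l.zip l.tail from he)
    have h2 := List.of_mem_zip (show (e'.1, e'.2) ∈ l'.zip l'.tail from he')
    by_cases hll : l = l'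
    · subst hll
      refine Prod.ext h12 ?_
      exact zip_tail_fst_unique (hnd l hl)
        (show (e.1, e.2) ∈ l.zip l.tail from he)
        (show (e.1, e'.2) ∈ l.zip l.tail from by rw [h12]; exact he')
    · exact absurd h1.1 (fun hmem => hdisj' l hl l' hl' hll hmem (h12 ▸ h2.1))
  · intro e he e' he' h12
    rw [List.mem_toFinset, hP, List.mem_flatMap] at he he'
    obtain ⟨l, hl, he⟩ := he
    obtain ⟨l', hl', he'⟩ := he'
    have h1 := List.of_mem_zip (show (e.1, e.2) ∈ l.zip l.tail from he)
    have h2 := List.of_mem_zip (show (e'.1, e'.2) ∈ l'.zip l'.tail from he')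
    by_cases hll : l = l'
    · subst hll
      refine Prod.ext ?_ h12
      exact zip_tail_snd_unique (hnd l hl)
        (show (e.1, e.2) ∈ l.zip l.tail from he)
        (show (e'.1, e.2) ∈ l.zip l.tail from by rw [h12]; exact he')
    · refine absurd (List.mem_of_mem_tail h1.2) ?_
      intro hmem
      exact hdisj' l hl l' hl' hll hmem (List.mem_of_mem_tail (h12 ▸ h2.2))
  · rw [List.toFinset_card_of_nodup hPnd]
    have := pairs_length_ge L
    rwa [hperm.length_eq, List.length_finRange] at this

variable {n : ℕ}

noncomputable def nxt (M : Finset (Fin n × Fin n)) (i : Fin n) : Option (Fin n) :=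
  if h : ∃ j, (i, j) ∈ M then some h.choose else none

lemma nxt_mem {M : Finset (Fin n × Fin n)} {i j : Fin n} (h : nxt M i = some j) :
    (i, j) ∈ M := by
  unfold nxt at h
  split at h
  · rename_i hex
    rw [Option.some_inj] at h
    exact h ▸ hex.choose_spec
  · exact absurd h (by simp)

lemma nxt_eq_some {M : Finset (Fin n × Fin n)}
    (hfst : ∀ e ∈ M, ∀ e' ∈ M, e.1 = e'.1 → e = e') {i j : Fin n}
    (hij : (i, j) ∈ M) : nxt M i = some j := by
  unfold nxt
  rw [dif_pos ⟨j, hij⟩]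
  have hex : ∃ j, (i, j) ∈ M := ⟨j, hij⟩
  have := hfst _ hex.choose_spec _ hij rfl
  rw [Option.some_inj]
  exact (Prod.mk.injEq .. ▸ this).2

noncomputable def chainFrom (M : Finset (Fin n × Fin n)) (hM : ∀ e ∈ M, e.1 < e.2) (i : Fin n) :
    List (Fin n) :=
  i ::
    (match h : nxt M i with
     | none => []
     | some j => chainFrom M hM j)
termination_by n - i.val
decreasing_by
  have h1 := hM _ (nxt_mem h)
  simp only [Fin.lt_def] at h1
  have h2 := j.isLt
  omega

lemma chainFrom_none {M : Finset (Fin n × Fin n)} {hM : ∀ e ∈ M, e.1 < e.2} {i : Fin n}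
    (h : nxt M i = none) : chainFrom M hM i = [i] := by
  rw [chainFrom.eq_def]
  split <;> simp_all

lemma chainFrom_some {M : Finset (Fin n × Fin n)} {hM : ∀ e ∈ M, e.1 < e.2} {i j : Fin n}
    (h : nxt M i = some j) : chainFrom M hM i = i :: chainFrom M hM j := by
  rw [chainFrom.eq_def]
  split <;> simp_all

section chainLemmas
variable {M : Finset (Fin n × Fin n)} {hM : ∀ e ∈ M, e.1 < e.2}


lemma chainFrom_rec (hM : ∀ e ∈ M, e.1 < e.2) (P : Fin n → Prop)
    (step : ∀ i, (∀ j, nxt M i = some j → P j) → P i) : ∀ i, P i := by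
  have key : ∀ k, ∀ i : Fin n, n - i.val ≤ k → P i := by
    intro k
    induction k with
    | zero => intro i hi; have := i.isLt; omega
    | succ k IH =>
      intro i hi
      refine step i fun j hj => ?_
      have hij := hM _ (nxt_mem hj)
      simp only [Fin.lt_def] at hij
      have := j.isLt
      exact IH j (by omega)
  exact fun i => key _ i le_rfl

lemma chainFrom_cons (i : Fin n) : ∃ tl, chainFrom M hM i = i :: tl := by
  cases h : nxt M i with
  | none => exact ⟨[], chainFrom_none h⟩
  | some j => exact ⟨_, chainFrom_some h⟩

lemma mem_chainFrom_self (i : Fin n) : i ∈ chainFrom M hM i := by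
  obtain ⟨tl, htl⟩ := chainFrom_cons (hM := hM) i
  rw [htl]; exact List.mem_cons_self

lemma chainFrom_chain' {r : Fin n → Fin n → Prop}
    (hr : ∀ i j, nxt M i = some j → r i j) (i : Fin n) :
    (chainFrom M hM i).Chain' r := by
  refine chainFrom_rec hM (fun i => (chainFrom M hM i).Chain' r) (fun i IH => ?_) i
  cases h : nxt M i with
  | none => rw [chainFrom_none h]; exact List.isChain_singleton _
  | some j =>
    rw [chainFrom_some h]
    obtain ⟨tl, htl⟩ := chainFrom_cons (hM := hM) j
    rw [htl, List.Chain', List.isChain_cons_cons]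
    exact ⟨hr i j h, htl ▸ IH j h⟩

lemma chainFrom_subset {i x : Fin n} (hx : x ∈ chainFrom M hM i) :
    ∀ y ∈ chainFrom M hM x, y ∈ chainFrom M hM i := by
  have key : ∀ i, ∀ x ∈ chainFrom M hM i, ∀ y ∈ chainFrom M hM x, y ∈ chainFrom M hM i := by
    refine chainFrom_rec hM _ (fun i IH => ?_)
    intro x hx y hy
    cases h : nxt M i with
    | none =>
      rw [chainFrom_none h] at hx ⊢
      rw [List.mem_singleton] at hx
      subst hx
      rwa [chainFrom_none h] at hy
    | some j =>
      rw [chainFrom_some h] at hx ⊢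
      rcases List.mem_cons.mp hx with hx | hx
      · subst hx
        rw [chainFrom_some h] at hy
        exact hy
      · exact List.mem_cons_of_mem i (IH j h x hx y hy)
  exact key i x hx

lemma chainFrom_struct {s a : Fin n} (ha : a ∈ chainFrom M hM s) :
    a = s ∨ ∃ b ∈ chainFrom M hM s, nxt M b = some a := by
  have key : ∀ s, ∀ a ∈ chainFrom M hM s,
      a = s ∨ ∃ b ∈ chainFrom M hM s, nxt M b = some a := by
    refine chainFrom_rec hM _ (fun s IH => ?_)
    intro a ha
    cases h : nxt M s with
    | none =>
      rw [chainFrom_none h, List.mem_singleton] at ha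
      exact Or.inl ha
    | some j =>
      rw [chainFrom_some h] at ha
      rcases List.mem_cons.mp ha with ha | ha
      · exact Or.inl ha
      · rcases IH j h a ha with rfl | ⟨b, hb, hb'⟩
        · exact Or.inr ⟨s, mem_chainFrom_self s, h⟩
        · exact Or.inr ⟨b, by rw [chainFrom_some h]; exact List.mem_cons_of_mem s hb, hb'⟩
  exact key s a ha

lemma chainFrom_nodup (i : Fin n) : (chainFrom M hM i).Nodup := by
  have hlt : (chainFrom M hM i).Chain' (· < ·) :=
    chainFrom_chain' (fun i j h => hM _ (nxt_mem h)) i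
  exact (List.isChain_iff_pairwise.mp hlt).imp (fun h => ne_of_lt h)

end chainLemmas


lemma partition_of_matching {n : ℕ} {covers : Fin n → Fin n → Prop}
    (hlt : ∀ i j, covers i j → i < j) (M : Finset (Fin n × Fin n))
    (hM : IsMatching n covers M) :
    ∃ L : List (List (Fin n)), L.length = n - M.card ∧ IsChainPartition n covers L := by
  classical
  obtain ⟨hcov, hfst, hsnd⟩ := hM
  have hM' : ∀ e ∈ M, e.1 < e.2 := fun e he => hlt _ _ (hcov e he)
  set S : Finset (Fin n) := Finset.univ \ M.image Prod.snd with hS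
  have cover : ∀ a : Fin n, ∃ s : Fin n, (∀ b, (b, s) ∉ M) ∧ a ∈ chainFrom M hM' s := by
    have key : ∀ k, ∀ a : Fin n, a.val < k →
        ∃ s, (∀ b, (b, s) ∉ M) ∧ a ∈ chainFrom M hM' s := by
      intro k
      induction k with
      | zero => intro a ha; omega
      | succ k IH =>
        intro a ha
        by_cases hp : ∃ b, (b, a) ∈ M
        · obtain ⟨b, hb⟩ := hp
          have hba : b.val < a.val := hM' _ hb
          obtain ⟨s, hs, hbs⟩ := IH b (by omega)
          refine ⟨s, hs, ?_⟩
          have hnx : nxt M b = some a := nxt_eq_some hfst hb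
          have haa : a ∈ chainFrom M hM' b := by
            rw [chainFrom_some hnx]
            exact List.mem_cons_of_mem b (mem_chainFrom_self a)
          exact chainFrom_subset hbs a haa
        · push_neg at hp
          exact ⟨a, fun b => hp b, mem_chainFrom_self a⟩
    exact fun a => key n a a.isLt
  have uniq : ∀ a s s' : Fin n, (∀ b, (b, s) ∉ M) → (∀ b, (b, s') ∉ M) →
      a ∈ chainFrom M hM' s → a ∈ chainFrom M hM' s' → s = s' := by
    have key : ∀ k, ∀ a : Fin n, a.val < k → ∀ s s' : Fin n,
        (∀ b, (b, s) ∉ M) → (∀ b, (b, s') ∉ M) →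
        a ∈ chainFrom M hM' s → a ∈ chainFrom M hM' s' → s = s' := by
      intro k
      induction k with
      | zero => intro a ha; omega
      | succ k IH =>
        intro a ha s s' hs hs' h1 h2
        rcases chainFrom_struct h1 with rfl | ⟨b, hb, hnb⟩
        · rcases chainFrom_struct h2 with rfl | ⟨b', hb', hnb'⟩
          · rfl
          · exact absurd (nxt_mem hnb') (hs b')
        · rcases chainFrom_struct h2 with rfl | ⟨b', hb', hnb'⟩
          · exact absurd (nxt_mem hnb) (hs' b)
          · have hbb : b = b' := by
              have := hsnd _ (nxt_mem hnb) _ (nxt_mem hnb') rfl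
              exact (Prod.mk.injEq .. ▸ this).1
            subst hbb
            have hba : b.val < a.val := hM' _ (nxt_mem hnb)
            exact IH b (by omega) s s' hs hs' hb hb'
    exact fun a => key n a a.isLt
  have hSmem : ∀ s : Fin n, s ∈ S ↔ ∀ b, (b, s) ∉ M := by
    intro s
    rw [hS, Finset.mem_sdiff]
    simp only [Finset.mem_univ, true_and, Finset.mem_image]
    constructor
    · intro h b hb
      exact h ⟨(b, s), hb, rfl⟩
    · intro h hex
      obtain ⟨e, he, hes⟩ := hex
      refine h e.1 ?_
      have he2 : e = (e.1, s) := by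
        rw [← hes]
      rwa [he2] at he
  refine ⟨S.toList.map (chainFrom M hM'), ?_, ?_, ?_⟩
  · rw [List.length_map, Finset.length_toList, hS,
      Finset.card_sdiff_of_subset (Finset.subset_univ _), Finset.card_univ, Fintype.card_fin,
      Finset.card_image_of_injOn]
    intro e he e' he' hee
    exact hsnd e he e' he' hee
  · intro l hl
    rw [List.mem_map] at hl
    obtain ⟨s, _, rfl⟩ := hl
    exact chainFrom_chain' (fun i j h => hcov _ (nxt_mem h)) s
  · have hndL : (S.toList.map (chainFrom M hM')).flatten.Nodup := by
      rw [List.nodup_flatten]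
      constructor
      · intro l hl
        rw [List.mem_map] at hl
        obtain ⟨s, _, rfl⟩ := hl
        exact chainFrom_nodup s
      · rw [List.pairwise_map]
        refine S.nodup_toList.pairwise_of_forall_ne ?_
        intro s hsm s' hsm' hne a ha ha'
        exact hne (uniq a s s' ((hSmem s).mp (Finset.mem_toList.mp hsm))
          ((hSmem s').mp (Finset.mem_toList.mp hsm')) ha ha')
    rw [List.perm_ext_iff_of_nodup hndL (List.nodup_finRange n)]
    intro a
    simp only [List.mem_finRange, iff_true]
    obtain ⟨s, hs, has⟩ := cover a
    rw [List.mem_flatten]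
    refine ⟨chainFrom M hM' s, ?_, has⟩
    rw [List.mem_map]
    exact ⟨s, Finset.mem_toList.mpr ((hSmem s).mpr hs), rfl⟩

/-- Minimum chain cover equals `n` minus maximum matching size. -/
theorem stmt_5 (n : ℕ) (covers : Fin n → Fin n → Prop)
    (hlt : ∀ i j, covers i j → i < j) (t m : ℕ)
    (ht : IsLeast {t | ∃ L : List (List (Fin n)),
      L.length = t ∧ IsChainPartition n covers L} t)
    (hm : IsGreatest {m | ∃ M : Finset (Fin n × Fin n),
      M.card = m ∧ IsMatching n covers M} m) :
    t = n - m := by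
  obtain ⟨⟨Lt, hLt, hLtp⟩, htlb⟩ := ht
  obtain ⟨⟨Mm, hMm, hMmm⟩, hmub⟩ := hm
  -- direction 1 : n - t ≤ m
  obtain ⟨M, hMmatch, hMcard⟩ := matching_of_partition Lt hLtp
  have h1 : n - t ≤ m := le_trans (hLt ▸ hMcard) (hmub ⟨M, rfl, hMmatch⟩)
  -- direction 2 : t ≤ n - m
  obtain ⟨L, hLlen, hLpart⟩ := partition_of_matching hlt Mm hMmm
  have h2 : t ≤ n - m := htlb ⟨L, by rw [hLlen, hMm], hLpart⟩
  -- also m ≤ n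
  have h3 : m ≤ n := by
    have hinj : (Mm.image Prod.snd).card = Mm.card :=
      Finset.card_image_of_injOn (fun e he e' he' h => hMmm.2.2 e he e' he' h)
    have hle := Finset.card_le_univ (Mm.image Prod.snd)
    rw [Fintype.card_fin, hinj, hMm] at hle
    exact hle
  omega
end

section
/- Let covers : Fin n → Fin n → Prop satisfy covers i j → i < j, and define compatible i j ↔ covers i j ∨ covers j i. Assume the minimum number of chains under covers needed to partition Fin n is k. Then there exists a set S ⊆ Fin n with |S| = k such that all elements of S are pairwise incompatible (for distinct i, j ∈ S, ¬covers i j and ¬covers j i). -/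
namespace Stmt6Aux

variable {n : ℕ}

/-- Follow the successor pointers `m` for at most `fuel` steps. -/
def chainAux (m : Fin n → Option (Fin n)) : ℕ → Fin n → List (Fin n)
  | 0, i => [i]
  | fuel+1, i => i :: ((m i).elim [] (chainAux m fuel))

lemma chainAux_head (m : Fin n → Option (Fin n)) (fuel : ℕ) (i : Fin n) :
    ∃ t, chainAux m fuel i = i :: t := by
  cases fuel with
  | zero => exact ⟨[], rfl⟩
  | succ f => exact ⟨_, rfl⟩

lemma self_mem_chainAux (m : Fin n → Option (Fin n)) (fuel : ℕ) (i : Fin n) :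
    i ∈ chainAux m fuel i := by
  obtain ⟨t, ht⟩ := chainAux_head m fuel i
  rw [ht]; exact List.mem_cons_self

lemma chainAux_chain' (m : Fin n → Option (Fin n)) :
    ∀ fuel (i : Fin n), (chainAux m fuel i).Chain' (fun a b => m a = some b)
  | 0, i => by simp [chainAux, List.Chain']
  | fuel+1, i => by
    rw [chainAux]
    cases hmi : m i with
    | none => simp [hmi, List.Chain']
    | some j =>
      simp only [Option.elim_some]
      obtain ⟨t, ht⟩ := chainAux_head m fuel j
      rw [ht]; unfold List.Chain'; rw [List.isChain_cons_cons]
      exact ⟨hmi, ht ▸ chainAux_chain' m fuel j⟩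

lemma chainAux_mem_next (m : Fin n → Option (Fin n))
    (hmono : ∀ i j, m i = some j → i < j) :
    ∀ fuel (i : Fin n), n - i.val ≤ fuel → ∀ j x, j ∈ chainAux m fuel i →
      m j = some x → x ∈ chainAux m fuel i
  | 0, i, hfuel => by have := i.isLt; omega
  | fuel+1, i, hfuel => by
    intro j x hj hx
    rw [chainAux] at hj ⊢
    rcases List.mem_cons.1 hj with rfl | hj
    · rw [hx, Option.elim_some]
      exact List.mem_cons_of_mem _ (self_mem_chainAux m fuel x)
    · cases hmi : m i with
      | none => rw [hmi] at hj; simp at hj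
      | some j0 =>
        simp only [hmi, Option.elim_some] at hj ⊢
        have hij0 := hmono i j0 hmi
        have : n - j0.val ≤ fuel := by
          have := j0.isLt; have : i.val < j0.val := hij0; omega
        exact List.mem_cons_of_mem _
          (chainAux_mem_next m hmono fuel j0 (by omega) j x hj hx)

lemma chainAux_mem_src (m : Fin n → Option (Fin n)) :
    ∀ fuel (i x : Fin n), x ∈ chainAux m fuel i →
      x = i ∨ ∃ j, j ∈ chainAux m fuel i ∧ m j = some x
  | 0, i, x => by
    intro hx
    simp only [chainAux, List.mem_singleton] at hx
    exact Or.inl hx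
  | fuel+1, i, x => by
    intro hx
    rw [chainAux] at hx ⊢
    rcases List.mem_cons.1 hx with rfl | hx
    · exact Or.inl rfl
    · cases hmi : m i with
      | none => rw [hmi] at hx; simp at hx
      | some j0 =>
        simp only [hmi, Option.elim_some] at hx ⊢
        rcases chainAux_mem_src m fuel j0 x hx with rfl | ⟨j, hj, hjx⟩
        · exact Or.inr ⟨i, List.mem_cons_self, hmi⟩
        · exact Or.inr ⟨j, List.mem_cons_of_mem _ hj, hjx⟩

lemma chainAux_nodup (m : Fin n → Option (Fin n))
    (hmono : ∀ i j, m i = some j → i < j) (fuel : ℕ) (i : Fin n) :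
    (chainAux m fuel i).Nodup := by
  have h1 : (chainAux m fuel i).Chain' (· < ·) :=
    (chainAux_chain' m fuel i).imp (fun a b hab => hmono a b hab)
  have h2 := List.isChain_iff_pairwise.1 h1
  exact h2.imp (fun hab => ne_of_lt hab)

lemma exists_partition (m : Fin n → Option (Fin n))
    (hmono : ∀ i j, m i = some j → i < j)
    (hinj : ∀ i i' x, m i = some x → m i' = some x → i = i') :
    ∃ L : List (List (Fin n)),
      L.length = (Finset.univ.filter (fun s : Fin n => ∀ j, m j ≠ some s)).card ∧
      (∀ l ∈ L, l.Chain' (fun a b => m a = some b)) ∧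
      L.flatten.Perm (List.finRange n) := by
  classical
  set starts := Finset.univ.filter (fun s : Fin n => ∀ j, m j ≠ some s) with hstarts
  refine ⟨(starts.sort (· ≤ ·)).map (chainAux m n), by simp, ?_, ?_⟩
  · intro l hl
    simp only [List.mem_map] at hl
    obtain ⟨s, _, rfl⟩ := hl
    exact chainAux_chain' m n s
  · have hroot : ∀ v : ℕ, ∀ x : Fin n, x.val = v → ∃ s ∈ starts, x ∈ chainAux m n s := by
      intro v
      induction v using Nat.strong_induction_on with
      | _ v ih =>
        intro x hx
        by_cases hs : ∀ j, m j ≠ some x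
        · exact ⟨x, by simp [hstarts, hs], self_mem_chainAux m n x⟩
        · push_neg at hs
          obtain ⟨j, hj⟩ := hs
          have hjx : (j : ℕ) < v := by rw [← hx]; exact hmono j x hj
          obtain ⟨s, hsS, hjs⟩ := ih j.val hjx j rfl
          exact ⟨s, hsS, chainAux_mem_next m hmono n s (by have := s.isLt; omega) j x hjs hj⟩
    have huniq : ∀ v : ℕ, ∀ x : Fin n, x.val = v → ∀ s ∈ starts, ∀ s' ∈ starts,
        x ∈ chainAux m n s → x ∈ chainAux m n s' → s = s' := by
      intro v
      induction v using Nat.strong_induction_on with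
      | _ v ih =>
        intro x hx s hsS s' hs'S hxs hxs'
        rcases chainAux_mem_src m n s x hxs with rfl | ⟨j, hjs, hj⟩
        · rcases chainAux_mem_src m n s' x hxs' with rfl | ⟨j, hjs', hj⟩
          · rfl
          · exact absurd hj ((Finset.mem_filter.1 hsS).2 j)
        · rcases chainAux_mem_src m n s' x hxs' with rfl | ⟨j', hjs', hj'⟩
          · exact absurd hj ((Finset.mem_filter.1 hs'S).2 j)
          · have hjj : j = j' := hinj j j' x hj hj'
            subst hjj
            have hjv : (j : ℕ) < v := by rw [← hx]; exact hmono j x hj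
            exact ih j.val hjv j rfl s hsS s' hs'S hjs hjs'
    refine (List.perm_ext_iff_of_nodup ?_ (List.nodup_finRange n)).2 ?_
    · rw [List.nodup_flatten]
      constructor
      · intro l hl
        simp only [List.mem_map] at hl
        obtain ⟨s, _, rfl⟩ := hl
        exact chainAux_nodup m hmono n s
      · rw [List.pairwise_map]
        have hnd : (starts.sort (· ≤ ·)).Nodup := starts.sort_nodup _
        refine hnd.imp_of_mem ?_
        intro s s' hs hs' hne x hxs hxs'
        exact hne (huniq x.val x rfl s ((Finset.mem_sort _).1 hs) s'
          ((Finset.mem_sort _).1 hs') hxs hxs')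
    · intro a
      simp only [List.mem_flatten, List.mem_map, List.mem_finRange, iff_true]
      obtain ⟨s, hsS, has⟩ := hroot a.val a rfl
      exact ⟨chainAux m n s, ⟨s, (Finset.mem_sort _).2 hsS, rfl⟩, has⟩

end Stmt6Aux

open Stmt6Aux

/-- Hard direction of the min-max theorem: if the minimum chain cover has size
`k`, then there exist `k` pairwise incompatible trips. -/
theorem stmt_6 (n : ℕ) (covers : Fin n → Fin n → Prop)
    (hlt : ∀ i j, covers i j → i < j) (k : ℕ)
    (hk : IsLeast {t | ∃ L : List (List (Fin n)),
      L.length = t ∧ IsChainPartition n covers L} k) :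
    ∃ S : Finset (Fin n), S.card = k ∧
      ∀ i ∈ S, ∀ j ∈ S, i ≠ j → ¬covers i j ∧ ¬covers j i := by
  classical
  set nbr : Finset (Fin n) → Finset (Fin n) :=
    fun S => S.biUnion fun i => Finset.univ.filter fun j => covers i j with hnbr
  set d : ℕ := Finset.univ.powerset.sup fun S => S.card - (nbr S).card with hd
  have hdS : ∀ S : Finset (Fin n), S.card - (nbr S).card ≤ d := by
    intro S
    rw [hd]
    exact Finset.le_sup (f := fun S : Finset (Fin n) => S.card - (nbr S).card)
      (Finset.mem_powerset.2 (Finset.subset_univ S))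
  set r : Fin n → Finset (Fin n ⊕ Fin d) := fun i =>
    (Finset.univ.filter fun j => covers i j).image Sum.inl ∪
      Finset.univ.image Sum.inr with hr
  have hall : ∀ A : Finset (Fin n), A.card ≤ (A.biUnion r).card := by
    intro A
    rcases A.eq_empty_or_nonempty with rfl | ⟨a0, ha0⟩
    · simp
    · have hsub : (nbr A).image Sum.inl ∪ Finset.univ.image Sum.inr ⊆ A.biUnion r := by
        intro x hx
        rcases Finset.mem_union.1 hx with hx | hx
        · obtain ⟨j, hj, rfl⟩ := Finset.mem_image.1 hx
          rw [hnbr] at hj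
          obtain ⟨i, hi, hij⟩ := Finset.mem_biUnion.1 hj
          exact Finset.mem_biUnion.2 ⟨i, hi,
            Finset.mem_union_left _ (Finset.mem_image_of_mem _ hij)⟩
        · exact Finset.mem_biUnion.2 ⟨a0, ha0, Finset.mem_union_right _ hx⟩
      have hdisj : Disjoint ((nbr A).image (Sum.inl : Fin n → Fin n ⊕ Fin d))
          (Finset.univ.image Sum.inr) := by
        simp only [Finset.disjoint_left, Finset.mem_image]
        rintro x ⟨j, _, rfl⟩ ⟨e, _, h⟩
        exact Sum.inl_ne_inr h.symm
      have hcard : ((nbr A).image Sum.inl ∪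
          (Finset.univ.image (Sum.inr : Fin d → Fin n ⊕ Fin d))).card
          = (nbr A).card + d := by
        rw [Finset.card_union_of_disjoint hdisj,
          Finset.card_image_of_injective _ Sum.inl_injective,
          Finset.card_image_of_injective _ Sum.inr_injective, Finset.card_univ,
          Fintype.card_fin]
      have h1 := Finset.card_le_card hsub
      rw [hcard] at h1
      have hA := hdS A
      omega
  obtain ⟨f, hfinj, hfr⟩ := (Finset.all_card_le_biUnion_card_iff_exists_injective r).1 hall
  set m : Fin n → Option (Fin n) := fun i => Sum.elim some (fun _ => none) (f i) with hm
  have hm_inl : ∀ i j, m i = some j → f i = Sum.inl j := by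
    intro i j h
    rw [hm] at h
    cases hfi : f i with
    | inl j' =>
      simp only [hfi, Sum.elim_inl, Option.some.injEq] at h
      rw [h]
    | inr e =>
      simp only [hfi, Sum.elim_inr] at h
      exact absurd h (by simp)
  have hm_cov : ∀ i j, m i = some j → covers i j := by
    intro i j h
    have hfi := hm_inl i j h
    have hri := hfr i
    rw [hfi, hr] at hri
    rcases Finset.mem_union.1 hri with hri | hri
    · obtain ⟨j', hj', hjj⟩ := Finset.mem_image.1 hri
      have : j' = j := Sum.inl_injective hjj
      subst this
      exact (Finset.mem_filter.1 hj').2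
    · obtain ⟨e, _, he⟩ := Finset.mem_image.1 hri
      exact absurd he (Sum.inr_ne_inl)
  have hmono : ∀ i j, m i = some j → i < j := fun i j h => hlt i j (hm_cov i j h)
  have hinj : ∀ i i' x, m i = some x → m i' = some x → i = i' := by
    intro i i' x h h'
    exact hfinj ((hm_inl i x h).trans (hm_inl i' x h').symm)
  -- the chain partition
  obtain ⟨L, hLlen, hLchain, hLperm⟩ := exists_partition m hmono hinj
  set starts := Finset.univ.filter (fun s : Fin n => ∀ j, m j ≠ some s) with hstarts
  have hkle : k ≤ starts.card := by
    have : starts.card ∈ {t | ∃ L : List (List (Fin n)),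
        L.length = t ∧ IsChainPartition n covers L} :=
      ⟨L, hLlen, fun l hl => (hLchain l hl).imp (fun a b h => hm_cov a b h), hLperm⟩
    exact hk.2 this
  -- starts.card ≤ d
  have hstd : starts.card ≤ d := by
    set Dom := Finset.univ.filter (fun j : Fin n => (m j).isSome) with hDom
    set Tgt := Finset.univ.filter (fun x : Fin n => ∃ j, m j = some x) with hTgt
    have hcardTgt : Dom.card = Tgt.card := by
      refine Finset.card_bij (fun j hj => (m j).get (Finset.mem_filter.1 hj).2) ?_ ?_ ?_
      · intro a ha
        rw [hTgt]
        exact Finset.mem_filter.2 ⟨Finset.mem_univ _, ⟨a, (Option.some_get _).symm⟩⟩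
      · intro a ha b hb hab
        exact hinj a b _ (Option.some_get _).symm
          (by rw [hab]; exact (Option.some_get _).symm)
      · intro x hx
        obtain ⟨j, hj⟩ := (Finset.mem_filter.1 hx).2
        refine ⟨j, Finset.mem_filter.2 ⟨Finset.mem_univ _, by rw [hj]; rfl⟩, ?_⟩
        simp [hj]
      
    have hDomC : (Finset.univ.filter (fun j : Fin n => ¬(m j).isSome)).card ≤ d := by
      have h1 : (Finset.univ.filter (fun j : Fin n => ¬(m j).isSome)).card
          ≤ (Finset.univ.image (Sum.inr : Fin d → Fin n ⊕ Fin d)).card := by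
        apply Finset.card_le_card_of_injOn f ?_ hfinj.injOn
        intro a ha
        rw [Finset.mem_coe, Finset.mem_filter] at ha
        cases hfa : f a with
        | inl j =>
          exfalso
          apply ha.2
          rw [hm]
          simp [hfa]
        | inr e => exact Finset.mem_image_of_mem _ (Finset.mem_univ e)
      rw [Finset.card_image_of_injective _ Sum.inr_injective, Finset.card_univ,
        Fintype.card_fin] at h1
      exact h1
    have hsplit := Finset.card_filter_add_card_filter_not
      (s := (Finset.univ : Finset (Fin n))) (p := fun j => (m j).isSome)
    have hstarts_compl : starts = Finset.univ \ Tgt := by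
      rw [hstarts, hTgt, ← Finset.filter_not]
      apply Finset.filter_congr
      intro x _
      simp [not_exists]
    have hTle : Tgt.card ≤ n := le_trans (Finset.card_le_univ _) (by simp)
    have hstc : starts.card = n - Tgt.card := by
      rw [hstarts_compl, Finset.card_sdiff_of_subset (Finset.subset_univ _), Finset.card_univ,
        Fintype.card_fin]
    have huniv : (Finset.univ : Finset (Fin n)).card = n := by simp
    rw [huniv] at hsplit
    rw [hstc, ← hcardTgt, hDom]
    omega
  -- the max-deficiency set
  obtain ⟨S0, _, hS0⟩ := Finset.exists_mem_eq_sup Finset.univ.powerset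
    ⟨∅, Finset.mem_powerset.2 (Finset.empty_subset _)⟩
    (fun S : Finset (Fin n) => S.card - (nbr S).card)
  have hdT : d ≤ (S0 \ nbr S0).card := by
    rw [hd, hS0]
    exact Finset.le_card_sdiff (nbr S0) S0
  obtain ⟨S, hST, hcard⟩ := Finset.exists_subset_card_eq
    (le_trans hkle (le_trans hstd hdT))
  refine ⟨S, hcard, ?_⟩
  intro i hi j hj _
  have hi' := Finset.mem_sdiff.1 (hST hi)
  have hj' := Finset.mem_sdiff.1 (hST hj)
  constructor
  · intro hcov
    apply hj'.2
    rw [hnbr]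
    exact Finset.mem_biUnion.2 ⟨i, hi'.1, Finset.mem_filter.2 ⟨Finset.mem_univ _, hcov⟩⟩
  · intro hcov
    apply hi'.2
    rw [hnbr]
    exact Finset.mem_biUnion.2 ⟨j, hj'.1, Finset.mem_filter.2 ⟨Finset.mem_univ _, hcov⟩⟩
end

section
/- Let covers : Fin n → Fin n → Prop with covers i j → i < j. Suppose I_D, I_P ⊆ Fin n are such that for all i ∈ I_D and j ∈ I_P, ¬covers i j (i.e., I_D ∪ I_P viewed in the bipartite graph is independent), and |I_D| + |I_P| = n + k. Then there is a set K ⊆ Fin n with |K| = k, K ⊆ I_D ∩ I_P, and for all distinct i, j ∈ K, ¬covers i j and ¬covers j i. -/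
/-- An independent set of size `n + k` in the bipartite compatibility graph,
split into drop-off side `ID` and pickup side `IP`, yields `k` indices in both
sides which form a pairwise incompatible set of trips. -/
theorem stmt_9 (n k : ℕ) (covers : Fin n → Fin n → Prop)
    (hlt : ∀ i j, covers i j → i < j)
    (ID IP : Finset (Fin n)) (hind : ∀ i ∈ ID, ∀ j ∈ IP, ¬covers i j)
    (hcard : ID.card + IP.card = n + k) :
    ∃ K : Finset (Fin n), K.card = k ∧ K ⊆ ID ∩ IP ∧
      ∀ i ∈ K, ∀ j ∈ K, i ≠ j → ¬covers i j ∧ ¬covers j i := by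
  have hunion : (ID ∪ IP).card ≤ n := by
    simpa using Finset.card_le_card (Finset.subset_univ (ID ∪ IP))
  have hk : k ≤ (ID ∩ IP).card := by
    have := Finset.card_union_add_card_inter ID IP
    omega
  obtain ⟨K, hK, hKcard⟩ := Finset.exists_subset_card_eq hk
  refine ⟨K, hKcard, hK, fun i hi j hj _ => ?_⟩
  have hi' := hK hi; have hj' := hK hj
  simp only [Finset.mem_inter] at hi' hj'
  exact ⟨hind i hi'.1 j hj'.2, hind j hj'.1 i hi'.2⟩
end

section
/- Let covers : Fin n → Fin n → Prop with covers i j → i < j, and let M be a maximum matching in the bipartite graph with edge set {(i, j) : covers i j}, |M| = m. Then n - m chains suffice to partition Fin n, and no partition into fewer than n - m chains exists. -/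
namespace Stmt11Aux

lemma flatten_map_singleton {α : Type*} (xs : List α) :
    (xs.map (fun a => [a])).flatten = xs := by
  induction xs <;> simp [*]

lemma last_of_no_succ {α : Type*} {R : α → α → Prop} {l : List α} (hc : l.Chain' R)
    {a : α} (ha : a ∈ l) (hno : ∀ y, ¬ R a y) : ∃ s, l = s ++ [a] := by
  obtain ⟨s, t, rfl⟩ := List.append_of_mem ha
  cases t with
  | nil => exact ⟨s, rfl⟩
  | cons y t' =>
    have hsuf : (a :: y :: t') <:+ s ++ a :: y :: t' := List.suffix_append _ _
    have := (hc.suffix hsuf)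
    rw [List.isChain_cons_cons] at this
    exact absurd this.1 (hno y)

lemma head_of_no_pred {α : Type*} {R : α → α → Prop} {l : List α} (hc : l.Chain' R)
    {b : α} (hb : b ∈ l) (hno : ∀ x, ¬ R x b) : ∃ t, l = b :: t := by
  obtain ⟨s, t, rfl⟩ := List.append_of_mem hb
  rcases List.eq_nil_or_concat s with rfl | ⟨s', y, rfl⟩
  · exact ⟨t, rfl⟩
  · have heq : s'.concat y ++ b :: t = s' ++ (y :: b :: t) := by simp
    rw [heq] at hc
    have hsuf : (y :: b :: t) <:+ s' ++ y :: b :: t := List.suffix_append _ _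
    have := hc.suffix hsuf
    rw [List.isChain_cons_cons] at this
    exact absurd this.1 (hno y)

lemma pairs_mem {α : Type*} {l : List α} {e : α × α} (he : e ∈ l.dropLast.zip l.tail) :
    ∃ i, ∃ h : i + 1 < l.length, e.1 = l[i] ∧ e.2 = l[i+1] := by
  obtain ⟨i, hi, hget⟩ := List.mem_iff_getElem.mp he
  rw [List.getElem_zip] at hget
  have hlen : i + 1 < l.length := by
    have := hi
    simp [List.length_zip, List.length_dropLast, List.length_tail] at this
    omega
  refine ⟨i, hlen, ?_, ?_⟩
  · rw [← hget]; simp [List.getElem_dropLast]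
  · rw [← hget]; simp [List.getElem_tail]

lemma chain'_rel {α : Type*} {R : α → α → Prop} {l : List α} (hc : l.Chain' R)
    {i : ℕ} (h : i + 1 < l.length) : R l[i] l[i+1] := by
  have := List.isChain_iff_getElem.mp hc i (by omega)
  simpa using this

/-- Key existence lemma: any matching yields a chain partition whose chains are
made of matching edges, with `L.length + M.card = n`. -/
lemma exists_part (n : ℕ) (covers : Fin n → Fin n → Prop)
    (hlt : ∀ i j, covers i j → i < j)
    (M : Finset (Fin n × Fin n)) (hM : IsMatching n covers M) :
    ∃ L : List (List (Fin n)), (∀ l ∈ L, l ≠ []) ∧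
      (∀ l ∈ L, l.Chain' (fun i j => (i, j) ∈ M)) ∧
      L.flatten.Perm (List.finRange n) ∧ L.length + M.card = n := by
  rcases M.eq_empty_or_nonempty with rfl | hne
  · refine ⟨(List.finRange n).map (fun i => [i]), ?_, ?_, ?_, ?_⟩
    · intro l hl; obtain ⟨i, _, rfl⟩ := List.mem_map.mp hl; simp
    · intro l hl; obtain ⟨i, _, rfl⟩ := List.mem_map.mp hl; exact List.isChain_singleton _
    · rw [flatten_map_singleton]
    · simp
  · obtain ⟨e, heM, hemin⟩ := Finset.exists_min_image M Prod.fst hne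
    have hcov : covers e.1 e.2 := hM.1 e heM
    have hM' : IsMatching n covers (M.erase e) := by
      refine ⟨fun f hf => hM.1 f (Finset.mem_of_mem_erase hf), ?_, ?_⟩
      · exact fun f hf f' hf' h =>
          hM.2.1 f (Finset.mem_of_mem_erase hf) f' (Finset.mem_of_mem_erase hf') h
      · exact fun f hf f' hf' h =>
          hM.2.2 f (Finset.mem_of_mem_erase hf) f' (Finset.mem_of_mem_erase hf') h
    have hcard : (M.erase e).card < M.card := Finset.card_erase_lt_of_mem heM
    obtain ⟨L', h1', h2', h3', h4'⟩ := exists_part n covers hlt (M.erase e) hM'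
    -- locate e.1 and e.2
    have ha_in : e.1 ∈ L'.flatten := (h3'.mem_iff).mpr (List.mem_finRange _)
    obtain ⟨l, hlL, hal⟩ := List.mem_flatten.mp ha_in
    have hb_in : e.2 ∈ L'.flatten := (h3'.mem_iff).mpr (List.mem_finRange _)
    obtain ⟨l₂, hl2L, hbl2⟩ := List.mem_flatten.mp hb_in
    -- e.1 is last in its chain
    have hnos : ∀ y, ¬ ((e.1, y) ∈ M.erase e) := by
      intro y hy
      have hyM := Finset.mem_of_mem_erase hy
      have : (e.1, y) = e := hM.2.1 _ hyM e heM rfl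
      exact (Finset.mem_erase.mp hy).1 this
    obtain ⟨s, hs⟩ := last_of_no_succ (h2' l hlL) hal hnos
    -- e.2 is first in its chain
    have hnop : ∀ x, ¬ ((x, e.2) ∈ M.erase e) := by
      intro x hx
      have hxM := Finset.mem_of_mem_erase hx
      have : (x, e.2) = e := hM.2.2 _ hxM e heM rfl
      exact (Finset.mem_erase.mp hx).1 this
    obtain ⟨t, ht⟩ := head_of_no_pred (h2' l₂ hl2L) hbl2 hnop
    -- chains are strictly increasing
    have hmono : ∀ l' ∈ L', l'.Chain' (· < ·) := by
      intro l' hl'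
      exact (h2' l' hl').imp (fun x y h => hlt x y (hM.1 _ (Finset.mem_of_mem_erase h)))
    have hab : e.1 < e.2 := hlt _ _ hcov
    have hnel : l ≠ l₂ := by
      intro h
      subst h
      have hmem : e.1 ∈ l := hal
      rw [ht] at hmem
      have hp : l.Pairwise (· < ·) :=
        List.isChain_iff_pairwise.mp (hmono l hlL)
      rw [ht] at hp
      rcases List.mem_cons.mp hmem with h1 | h1
      · exact absurd (h1 ▸ hab) (lt_irrefl _)
      · have : e.2 < e.1 := (List.pairwise_cons.mp hp).1 _ h1
        omega
    have hperm1 := List.perm_cons_erase hlL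
    obtain ⟨rest, hperm⟩ : ∃ rest, L'.Perm (l :: l₂ :: rest) := by
      refine ⟨_, hperm1.trans (List.Perm.cons _ (List.perm_cons_erase ?_))⟩
      rcases List.mem_cons.mp (hperm1.mem_iff.mp hl2L) with h | h
      · exact absurd h.symm hnel
      · exact h
    have hrest_sub : ∀ x ∈ rest, x ∈ L' := by
      intro x hx
      exact hperm.mem_iff.mpr (by simp [hx])
    refine ⟨(l ++ l₂) :: rest, ?_, ?_, ?_, ?_⟩
    · intro l' hl'
      rcases List.mem_cons.mp hl' with rfl | h
      · rw [hs]; simp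
      · exact h1' _ (hrest_sub _ h)
    · intro l' hl'
      rcases List.mem_cons.mp hl' with rfl | h
      · refine List.IsChain.append ?_ ?_ ?_
        · exact (h2' l hlL).imp (fun x y h => Finset.mem_of_mem_erase h)
        · exact (h2' l₂ hl2L).imp (fun x y h => Finset.mem_of_mem_erase h)
        · intro x hx y hy
          rw [hs] at hx
          rw [List.getLast?_concat] at hx
          rw [ht] at hy
          simp only [List.head?_cons, Option.mem_def, Option.some.injEq] at hx hy
          subst hx; subst hy
          simpa using heM
      · exact ((h2' _ (hrest_sub _ h)).imp (fun x y h => Finset.mem_of_mem_erase h))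
    · have h1 : ((l ++ l₂) :: rest).flatten = (l :: l₂ :: rest).flatten := by
        simp
      rw [h1]
      exact (hperm.flatten.symm).trans h3'
    · have hlen : L'.length = rest.length + 2 := by
        have := hperm.length_eq
        simpa using this
      have hc : (M.erase e).card + 1 = M.card := Finset.card_erase_add_one heM
      simp only [List.length_cons]
      omega
termination_by M.card

end Stmt11Aux

open Stmt11Aux in
/-- If `M` is a maximum matching of size `m`, then `n - m` chains suffice to
partition `Fin n` and no partition into fewer chains exists. -/
theorem stmt_11 (n m : ℕ) (covers : Fin n → Fin n → Prop)
    (hlt : ∀ i j, covers i j → i < j)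
    (M : Finset (Fin n × Fin n)) (hM : IsMatching n covers M)
    (hmax : ∀ M' : Finset (Fin n × Fin n), IsMatching n covers M' → M'.card ≤ M.card)
    (hm : M.card = m) :
    (∃ L : List (List (Fin n)), L.length = n - m ∧ IsChainPartition n covers L) ∧
    (∀ L : List (List (Fin n)), IsChainPartition n covers L → n - m ≤ L.length) := by
  constructor
  · obtain ⟨L, _, h2, h3, h4⟩ := exists_part n covers hlt M hM
    refine ⟨L, by omega, ?_, h3⟩
    intro l hl
    exact (h2 l hl).imp (fun x y h => hM.1 _ h)
  · intro L hCP
    -- build the matching of consecutive pairs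
    set P : List (Fin n × Fin n) := (L.map (fun l => l.dropLast.zip l.tail)).flatten with hP
    have hnd : L.flatten.Nodup := (hCP.2.nodup_iff).mpr (List.nodup_finRange n)
    obtain ⟨hnd_each, hnd_pw⟩ := List.nodup_flatten.mp hnd
    have hmemP : ∀ e ∈ P, ∃ l ∈ L, e ∈ l.dropLast.zip l.tail := by
      intro e he
      rw [hP, List.mem_flatten] at he
      obtain ⟨q, hq, heq⟩ := he
      obtain ⟨l, hl, rfl⟩ := List.mem_map.mp hq
      exact ⟨l, hl, heq⟩
    have hfst : ∀ (l : List (Fin n)) (e : Fin n × Fin n),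
        e ∈ l.dropLast.zip l.tail → e.1 ∈ l ∧ e.2 ∈ l := by
      intro l e he
      have := List.of_mem_zip he
      exact ⟨(List.dropLast_sublist l).mem this.1, (List.tail_sublist l).mem this.2⟩
    -- matching property
    have hmatch : IsMatching n covers P.toFinset := by
      refine ⟨?_, ?_, ?_⟩
      · intro e he
        obtain ⟨l, hl, he'⟩ := hmemP e (List.mem_toFinset.mp he)
        obtain ⟨i, hi, h1, h2⟩ := pairs_mem he'
        rw [h1, h2]
        exact chain'_rel (hCP.1 l hl) hi
      · intro e he e' he' heq
        obtain ⟨l, hl, hel⟩ := hmemP e (List.mem_toFinset.mp he)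
        obtain ⟨l', hl', hel'⟩ := hmemP e' (List.mem_toFinset.mp he')
        have hll' : l = l' := by
          by_contra hne
          have hdisj : List.Disjoint l l' :=
            @List.Pairwise.forall _ _ _ ⟨fun _ _ h => h.symm⟩ hnd_pw _ hl _ hl' hne
          exact hdisj (hfst l e hel).1 (heq ▸ (hfst l' e' hel').1)
        subst hll'
        obtain ⟨i, hi, h1, h2⟩ := pairs_mem hel
        obtain ⟨j, hj, h1', h2'⟩ := pairs_mem hel'
        have : l[i] = l[j] := by rw [← h1, ← h1', heq]
        have hij : i = j := ((hnd_each l hl).getElem_inj_iff).mp this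
        subst hij
        exact Prod.ext (by rw [h1, h1']) (by rw [h2, h2'])
      · intro e he e' he' heq
        obtain ⟨l, hl, hel⟩ := hmemP e (List.mem_toFinset.mp he)
        obtain ⟨l', hl', hel'⟩ := hmemP e' (List.mem_toFinset.mp he')
        have hll' : l = l' := by
          by_contra hne
          have hdisj : List.Disjoint l l' :=
            @List.Pairwise.forall _ _ _ ⟨fun _ _ h => h.symm⟩ hnd_pw _ hl _ hl' hne
          exact hdisj (hfst l e hel).2 (heq ▸ (hfst l' e' hel').2)
        subst hll'
        obtain ⟨i, hi, h1, h2⟩ := pairs_mem hel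
        obtain ⟨j, hj, h1', h2'⟩ := pairs_mem hel'
        have : l[i+1] = l[j+1] := by rw [← h2, ← h2', heq]
        have hij : i + 1 = j + 1 := ((hnd_each l hl).getElem_inj_iff).mp this
        have hij' : i = j := by omega
        subst hij'
        exact Prod.ext (by rw [h1, h1']) (by rw [h2, h2'])
    -- P is nodup
    have hndP : P.Nodup := by
      rw [hP, List.nodup_flatten]
      constructor
      · intro q hq
        obtain ⟨l, hl, rfl⟩ := List.mem_map.mp hq
        have hmapfst : (l.dropLast.zip l.tail).map Prod.fst = l.dropLast :=
          List.map_fst_zip (by simp)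
        have : ((l.dropLast.zip l.tail).map Prod.fst).Nodup := by
          rw [hmapfst]
          exact (hnd_each l hl).sublist (List.dropLast_sublist l)
        exact this.of_map _
      · refine List.Pairwise.map _ ?_ hnd_pw
        intro a b hab
        intro e he he'
        exact hab (hfst a e he).1 (hfst b e he').1
    -- counting
    have hcardP : P.toFinset.card = P.length := List.toFinset_card_of_nodup hndP
    have hlenP : P.length = (L.map (fun l => l.length - 1)).sum := by
      rw [hP, List.length_flatten, List.map_map]
      congr 1
      apply List.map_congr_left
      intro l hl
      simp [List.length_zip, List.length_dropLast, List.length_tail]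
    have hn : (L.map List.length).sum = n := by
      have := hCP.2.length_eq
      rw [List.length_flatten] at this
      simpa using this
    have hsum : (L.map List.length).sum ≤ (L.map (fun l => l.length - 1)).sum + L.length := by
      have h1 : (L.map List.length).sum ≤ (L.map (fun l => (l.length - 1) + 1)).sum := by
        apply List.sum_le_sum
        intro l _
        omega
      have h2 : (L.map (fun l => (l.length - 1) + 1)).sum
          = (L.map (fun l => l.length - 1)).sum + L.length := by
        rw [List.sum_map_add]
        simp [List.map_const']
      omega
    have hle : P.toFinset.card ≤ m := hm ▸ hmax _ hmatch
    omega
end
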